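/- Let A be a finite set. Every nondegenerate simplex of the partition complex NP(A), i.e. every strictly increasing chain P₀ < ⋯ < P_p of partitions of A strictly between the indiscrete and the discrete partition, is a face of an elementary simplex: it can be extended to a strictly increasing chain Q₀ < ⋯ < Q_q containing the P_i as a subchain, such that the indiscrete partition refines to Q₀ at a single vertex and for each 0 ≤ i < q exactly one block of Q_i is subdivided in passing to Q_{i+1}. -/

import Mathlib

open CategoryTheory Opposite

noncomputable section

/-- The poset of partitions of `A` (as setoids) strictly finer than the
indiscrete partition `⊤` and strictly coarser than the discrete partition `⊥`,
ordered by refinement (the coarser partition being the smaller one). -/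
def PartitionPoset (A : Type) : Type := { r : Setoid A // r ≠ ⊥ ∧ r ≠ ⊤ }

instance (A : Type) : PartialOrder (PartitionPoset A) :=
  PartialOrder.lift (fun P => OrderDual.toDual P.1)
    (fun _ _ h => Subtype.ext (OrderDual.toDual.injective h))

/-- The partition complex of `A`: the nerve of the poset of nontrivial partitions. -/
abbrev partitionComplex (A : Type) : SSet.{0} := nerve (PartitionPoset A)

/-- The blocks of a partition. -/
def PartitionPoset.blocks {A : Type} (P : PartitionPoset A) : Set (Set A) := P.1.classes

theorem PartitionPoset.le_iff {A : Type} {P Q : PartitionPoset A} :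
    P ≤ Q ↔ Q.1 ≤ P.1 := Iff.rfl


namespace ElemExtAux

set_option linter.unusedSectionVars false

variable {A : Type} [Fintype A]

/-- Intermediate setoid: refine only inside the (saturated) set `c`. -/
def mid (s t : Setoid A) (c : Set A) (hc : ∀ ⦃x y⦄, x ∈ c → s x y → y ∈ c) : Setoid A where
  r x y := s x y ∧ (x ∈ c → t x y)
  iseqv := ⟨fun x => ⟨s.refl x, fun _ => t.refl x⟩,
    fun {x y} h => ⟨s.symm h.1, fun hy => t.symm (h.2 (hc hy (s.symm h.1)))⟩,
    fun {x y z} h1 h2 => ⟨s.trans h1.1 h2.1, fun hx => t.trans (h1.2 hx) (h2.2 (hc hx h1.1))⟩⟩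

lemma exists_rel_not_rel {s t : Setoid A} (hts : t ≤ s) (hne : t ≠ s) :
    ∃ x y, s x y ∧ ¬ t x y := by
  by_contra h
  push_neg at h
  exact hne (le_antisymm hts (fun x y hxy => h x y hxy))

lemma exists_estep (s t : Setoid A) (hts : t ≤ s) (hne : t ≠ s) :
    ∃ m : Setoid A, t ≤ m ∧ m ≤ s ∧ m ≠ s ∧
      (∃! b : Set A, b ∈ s.classes ∧ b ∉ m.classes) := by
  obtain ⟨x, y, hs, ht⟩ := exists_rel_not_rel hts hne
  set c : Set A := {z | s x z} with hcdef
  have hsat : ∀ ⦃u v⦄, u ∈ c → s u v → v ∈ c := fun u v hu huv => s.trans hu huv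
  refine ⟨mid s t c hsat, ?_, ?_, ?_, ?_⟩
  · exact fun u v h => ⟨hts h, fun _ => h⟩
  · exact fun u v h => h.1
  · intro h
    have hm : (mid s t c hsat) x y := by rw [h]; exact hs
    exact ht (hm.2 (s.refl x))
  · refine ⟨c, ⟨⟨x, Set.ext fun z => ⟨fun hz => s.symm hz, fun hz => s.symm hz⟩⟩, ?_⟩, ?_⟩
    · rintro ⟨z, hz⟩
      have hxz : (mid s t c hsat) x z := by
        have hx : x ∈ c := s.refl x
        rw [hz] at hx; exact hx
      have hyz : (mid s t c hsat) y z := by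
        have hy : y ∈ c := hs
        rw [hz] at hy; exact hy
      exact ht (t.trans (hxz.2 (s.refl x)) (t.symm (hyz.2 hs)))
    · rintro b ⟨⟨z, hz⟩, hbm⟩
      by_cases hzc : z ∈ c
      · subst hz
        have hxz : s x z := hzc
        ext w
        constructor
        · intro hw
          exact s.trans hxz (s.symm (show s w z from hw))
        · intro hw
          exact s.trans (s.symm (show s x w from hw)) hxz
      · exfalso
        apply hbm
        refine ⟨z, ?_⟩
        rw [hz]
        ext w
        constructor
        · intro hw
          exact ⟨hw, fun hwc => absurd (hsat hwc hw) hzc⟩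
        · exact fun hw => hw.1

/-- number of pairs related by `s` but not `t` -/
noncomputable def dist (s t : Setoid A) : ℕ :=
  Set.ncard {p : A × A | s p.1 p.2 ∧ ¬ t p.1 p.2}

lemma dist_lt {s t m : Setoid A} (htm : t ≤ m) (hms : m ≤ s) (hne : m ≠ s) :
    dist m t < dist s t := by
  apply Set.ncard_lt_ncard _ (Set.toFinite _)
  constructor
  · rintro ⟨a, b⟩ ⟨h1, h2⟩
    exact ⟨hms h1, h2⟩
  · intro hsub
    obtain ⟨x, y, hs, hm⟩ := exists_rel_not_rel hms hne
    have : ¬ t x y := fun h => hm (htm h)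
    exact hm (hsub (a := (x, y)) ⟨hs, this⟩).1

lemma interp : ∀ (n : ℕ) (s t : Setoid A), dist s t < n → t ≤ s → t ≠ s →
    ∃ (k : ℕ) (f : ℕ → Setoid A), 1 ≤ k ∧ f 0 = s ∧ f k = t ∧
      (∀ i ≤ k, t ≤ f i ∧ f i ≤ s) ∧
      (∀ i < k, f (i+1) ≤ f i ∧ f (i+1) ≠ f i ∧
        ∃! b : Set A, b ∈ (f i).classes ∧ b ∉ (f (i+1)).classes) := by
  intro n
  induction n with
  | zero => exact fun s t h => absurd h (by omega)
  | succ n IH =>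
    intro s t hd hts hne
    obtain ⟨m, htm, hms, hmne, hstep⟩ := exists_estep s t hts hne
    by_cases hmt : m = t
    · refine ⟨1, fun i => if i = 0 then s else t, le_refl 1, by simp, by simp, ?_, ?_⟩
      · intro i hi
        by_cases h0 : i = 0 <;> simp [h0, hts]
      · intro i hi
        have h0 : i = 0 := by omega
        subst h0
        simp only [if_pos rfl, if_neg one_ne_zero]
        rw [← hmt]
        exact ⟨hms, hmne, hstep⟩
    · have hdm : dist m t < n := by
        have := dist_lt htm hms hmne
        omega
      obtain ⟨k, f, hk, hf0, hfk, hbetween, hsteps⟩ := IH m t hdm htm (Ne.symm hmt)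
      refine ⟨k + 1, fun i => if i = 0 then s else f (i - 1), by omega, by simp, ?_, ?_, ?_⟩
      · simp only [if_neg (by omega : ¬ k + 1 = 0)]
        simpa using hfk
      · intro i hi
        by_cases h0 : i = 0
        · simp [h0, hts]
        · simp only [if_neg h0]
          obtain ⟨h1, h2⟩ := hbetween (i - 1) (by omega)
          exact ⟨h1, le_trans h2 hms⟩
      · intro i hi
        by_cases h0 : i = 0
        · subst h0
          simp only [if_pos rfl, if_neg one_ne_zero]
          rw [show (1 : ℕ) - 1 = 0 from rfl, hf0]
          exact ⟨hms, hmne, hstep⟩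
        · simp only [if_neg h0, if_neg (by omega : ¬ i + 1 = 0)]
          have he : i + 1 - 1 = (i - 1) + 1 := by omega
          rw [he]
          exact hsteps (i - 1) (by omega)

/-- An elementary step in the partition poset. -/
def EStep (x y : PartitionPoset A) : Prop :=
  x < y ∧ ∃! b : Set A, b ∈ x.1.classes ∧ b ∉ y.1.classes

lemma interpP (x y : PartitionPoset A) (h : x < y) :
    ∃ (k : ℕ) (g : ℕ → PartitionPoset A), 1 ≤ k ∧ g 0 = x ∧ g k = y ∧
      ∀ i < k, EStep (g i) (g (i+1)) := by
  have hts : y.1 ≤ x.1 := h.le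
  have hne : y.1 ≠ x.1 := fun he => h.ne (Subtype.ext he.symm)
  obtain ⟨k, f, hk, hf0, hfk, hbetween, hsteps⟩ :=
    interp (dist x.1 y.1 + 1) x.1 y.1 (by omega) hts hne
  have hmem : ∀ i ≤ k, f i ≠ ⊥ ∧ f i ≠ ⊤ := by
    intro i hi
    obtain ⟨h1, h2⟩ := hbetween i hi
    constructor
    · intro hbot
      rw [hbot] at h1
      exact y.2.1 (le_bot_iff.mp h1)
    · intro htop
      rw [htop] at h2
      exact x.2.2 (top_le_iff.mp h2)
  refine ⟨k, fun i => if hi : i ≤ k then ⟨f i, hmem i hi⟩ else y, hk, ?_, ?_, ?_⟩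
  · simp only [dif_pos (Nat.zero_le k)]
    exact Subtype.ext hf0
  · simp only [dif_pos (le_refl k)]
    erw [dif_pos (le_refl k)]
    exact Subtype.ext hfk
  · intro i hi
    obtain ⟨h1, h2, h3⟩ := hsteps i hi
    have hik : i ≤ k := le_of_lt hi
    have hik1 : i + 1 ≤ k := hi
    simp only [dif_pos hik, dif_pos hik1]
    erw [dif_pos hik, dif_pos hik1]
    refine ⟨?_, h3⟩
    erw [lt_iff_le_and_ne]
    exact ⟨h1, fun he => h2 (congrArg Subtype.val he).symm⟩

lemma mainAux : ∀ (p : ℕ) (P : Fin (p+1) → PartitionPoset A), StrictMono P →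
    ∃ (q : ℕ) (f : ℕ → PartitionPoset A) (ι : Fin (p+1) → ℕ),
      ι 0 = 0 ∧ ι (Fin.last p) = q ∧ StrictMono ι ∧ (∀ i, f (ι i) = P i) ∧
      ∀ i < q, EStep (f i) (f (i+1)) := by
  intro p
  induction p with
  | zero =>
    intro P _
    refine ⟨0, fun _ => P 0, fun _ => 0, rfl, rfl, ?_, ?_, by omega⟩
    · intro a b hab
      rw [Fin.lt_def] at hab
      have ha := a.isLt
      have hb := b.isLt
      omega
    · intro i
      have : i = 0 := Fin.fin_one_eq_zero i
      rw [this]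
  | succ p IH =>
    intro P hP
    have hP' : StrictMono (fun j : Fin (p+1) => P j.succ) :=
      fun a b h => hP (Fin.succ_lt_succ_iff.mpr h)
    obtain ⟨q', f', ι', hι0, hιlast, hιmono, hfι, hsteps'⟩ := IH _ hP'
    have h01 : P 0 < P 1 := hP (by
      rw [Fin.lt_def]
      show (0 : ℕ) < (1 : Fin (p+2)).val
      rw [Fin.val_one]
      omega)
    obtain ⟨k, g, hk, hg0, hgk, hgsteps⟩ := interpP (P 0) (P 1) h01
    have hgkP : g k = f' 0 := by
      rw [hgk, ← Fin.succ_zero_eq_one, ← hfι 0, hι0]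
    refine ⟨k + q', fun i => if i < k then g i else f' (i - k),
      Fin.cons 0 (fun j => k + ι' j), ?_, ?_, ?_, ?_, ?_⟩
    · exact Fin.cons_zero _ _
    · rw [← Fin.succ_last, Fin.cons_succ, hιlast]
    · intro a b hab
      induction a using Fin.cases with
      | zero =>
        induction b using Fin.cases with
        | zero => exact absurd hab (lt_irrefl _)
        | succ j => simp only [Fin.cons_zero, Fin.cons_succ]; omega
      | succ a =>
        induction b using Fin.cases with
        | zero => exact absurd hab (Fin.not_lt_zero _)
        | succ b =>
          simp only [Fin.cons_succ]
          have := hιmono (Fin.succ_lt_succ_iff.mp hab)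
          omega
    · intro i
      induction i using Fin.cases with
      | zero =>
        simp only [Fin.cons_zero]
        show (if 0 < k then g 0 else f' (0 - k)) = P 0
        rw [if_pos (by omega : (0:ℕ) < k), hg0]
      | succ j =>
        simp only [Fin.cons_succ]
        show (if k + ι' j < k then g (k + ι' j) else f' (k + ι' j - k)) = P j.succ
        rw [if_neg (by omega), Nat.add_sub_cancel_left, hfι j]
    · intro i hi
      by_cases hik : i < k
      · have hf1 : (if i + 1 < k then g (i+1) else f' (i + 1 - k)) = g (i+1) := by
          by_cases h1 : i + 1 < k
          · rw [if_pos h1]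
          · have : i + 1 = k := by omega
            rw [if_neg h1, this, Nat.sub_self, ← hgkP]
        simp only [if_pos hik, hf1]
        exact hgsteps i hik
      · have he : i + 1 - k = (i - k) + 1 := by omega
        simp only [if_neg hik, if_neg (by omega : ¬ i + 1 < k), he]
        exact hsteps' (i - k) (by omega)

end ElemExtAux

/-- Every nondegenerate simplex of the partition complex `NP(A)`, i.e. every strictly
increasing chain `P₀ < ⋯ < P_p` of partitions of `A` strictly between the indiscrete
and the discrete partition, is a face of an elementary simplex: it extends to a strictly
increasing chain `Q₀ < ⋯ < Q_q` containing the `Pᵢ` as a subchain, such that the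
indiscrete partition refines to `Q₀` at a single vertex (exactly one of its blocks is
subdivided) and for each `0 ≤ i < q` exactly one block of `Qᵢ` is subdivided in passing
to `Q_{i+1}`. -/
theorem exists_elementary_extension (A : Type) [Fintype A] (p : ℕ)
    (P : Fin (p + 1) → PartitionPoset A) (hP : StrictMono P) :
    ∃ (q : ℕ) (Q : Fin (q + 1) → PartitionPoset A) (ι : Fin (p + 1) → Fin (q + 1)),
      StrictMono Q ∧ StrictMono ι ∧ (∀ i, Q (ι i) = P i) ∧
      (∃! b : Set A, b ∈ (⊤ : Setoid A).classes ∧ b ∉ (Q 0).1.classes) ∧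
      (∀ i : Fin q, ∃! b : Set A,
        b ∈ (Q i.castSucc).1.classes ∧ b ∉ (Q i.succ).1.classes) := by
  have hA : Nonempty A := by
    by_contra h
    exact (P 0).2.1 (Setoid.ext fun a _ => absurd ⟨a⟩ h)
  obtain ⟨q, f, ι, hι0, hιlast, hιmono, hfι, hsteps⟩ := ElemExtAux.mainAux p P hP
  have hbound : ∀ i, ι i ≤ q := fun i => le_of_le_of_eq (hιmono.monotone (Fin.le_last i)) hιlast
  refine ⟨q, fun i => f i.1, fun i => ⟨ι i, by have := hbound i; omega⟩, ?_, ?_, ?_, ?_, ?_⟩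
  · rw [Fin.strictMono_iff_lt_succ]
    intro i
    exact (hsteps i.1 i.isLt).1
  · intro a b hab
    exact Fin.mk_lt_mk.mpr (hιmono hab)
  · intro i
    exact hfι i
  · have hQ0 : f 0 = P 0 := by
      have := hfι 0
      rwa [hι0] at this
    refine ⟨Set.univ, ⟨⟨Classical.arbitrary A, ?_⟩, ?_⟩, ?_⟩
    · ext z
      simp [Setoid.top_def]
    · show Set.univ ∉ (f (0 : Fin (q+1)).1).1.classes
      rw [show ((0 : Fin (q+1)).1) = 0 from rfl, hQ0]
      rintro ⟨z, hz⟩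
      have hall : ∀ x, (P 0).1 x z := by
        intro x
        have : x ∈ Set.univ := Set.mem_univ x
        rw [hz] at this
        exact this
      exact (P 0).2.2 (Setoid.eq_top_iff.mpr fun a b =>
        (P 0).1.trans (hall a) ((P 0).1.symm (hall b)))
    · rintro b ⟨⟨z, hz⟩, _⟩
      rw [hz]
      ext w
      simp [Setoid.top_def]
  · intro i
    exact (hsteps i.1 i.isLt).2


end
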